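/- arXiv:2205.05530 — 2 statements merged into one kernel-verified Lean document; each statement's English description precedes it below -/
import Mathlib

section
/- Let A be a real symmetric n×n matrix and B a principal (n-1)×(n-1) submatrix of A. If μ₁≥…≥μₙ are the eigenvalues of A and μ'₁≥…≥μ'_{n-1} those of B, then μᵢ ≥ μ'ᵢ ≥ μ_{i+1} for all 1≤i≤n-1. -/
open Matrix

noncomputable section

def enorm {d : ℕ} (v : Fin d → ℝ) : ℝ := Real.sqrt (∑ i, v i ^ 2)

def dvec {n d : ℕ} (p : Fin n → Fin d → ℝ) (i j : Fin n) : Fin d → ℝ :=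
  if p i = p j then 0 else (_root_.enorm (p i - p j))⁻¹ • (p i - p j)

abbrev EdgeIdx {n : ℕ} (G : SimpleGraph (Fin n)) [DecidableRel G.Adj] : Type :=
  {e : Fin n × Fin n // e.1 < e.2 ∧ G.Adj e.1 e.2}

def rigidity {n d : ℕ} (G : SimpleGraph (Fin n)) [DecidableRel G.Adj]
    (p : Fin n → Fin d → ℝ) : Matrix (Fin n × Fin d) (EdgeIdx G) ℝ :=
  fun v e => ((if v.1 = e.1.1 then (1:ℝ) else 0) - (if v.1 = e.1.2 then 1 else 0))
      * dvec p e.1.1 e.1.2 v.2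

def stiffness {n d : ℕ} (G : SimpleGraph (Fin n)) [DecidableRel G.Adj]
    (p : Fin n → Fin d → ℝ) : Matrix (Fin n × Fin d) (Fin n × Fin d) ℝ :=
  rigidity G p * (rigidity G p)ᴴ

def lowerStiffness {n d : ℕ} (G : SimpleGraph (Fin n)) [DecidableRel G.Adj]
    (p : Fin n → Fin d → ℝ) : Matrix (EdgeIdx G) (EdgeIdx G) ℝ :=
  (rigidity G p)ᴴ * rigidity G p

theorem stiffness_isHermitian {n d : ℕ} (G : SimpleGraph (Fin n)) [DecidableRel G.Adj]
    (p : Fin n → Fin d → ℝ) : (stiffness G p).IsHermitian :=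
  Matrix.isHermitian_mul_conjTranspose_self _

def eigs {m : Type*} [Fintype m] [DecidableEq m] (A : Matrix m m ℝ)
    (hA : A.IsHermitian) : Multiset ℝ :=
  Finset.univ.val.map hA.eigenvalues

def ascEigs {m : Type*} [Fintype m] [DecidableEq m] (A : Matrix m m ℝ)
    (hA : A.IsHermitian) : List ℝ :=
  (eigs A hA).sort (· ≤ ·)

def nthSmallest {m : Type*} [Fintype m] [DecidableEq m] (A : Matrix m m ℝ)
    (hA : A.IsHermitian) (k : ℕ) : ℝ :=
  (ascEigs A hA).getD (k-1) 0

/-- List of eigenvalues of a real symmetric matrix, with multiplicity,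
in decreasing order. -/
def descEigs {m : Type*} [Fintype m] [DecidableEq m] (A : Matrix m m ℝ)
    (hA : A.IsHermitian) : List ℝ :=
  (ascEigs A hA).reverse


open Matrix Finset Submodule Module

noncomputable section Aux

variable {N : ℕ}

/-- extend a vector by inserting a zero at position `k` -/
def ext0 (k : Fin (N+1)) : (Fin N → ℝ) →ₗ[ℝ] (Fin (N+1) → ℝ) where
  toFun y i := ∑ j, if k.succAbove j = i then y j else 0
  map_add' y z := by funext i; simp [← Finset.sum_add_distrib, ite_add_ite]
  map_smul' c y := by funext i; simp [Finset.mul_sum, mul_ite]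

lemma ext0_succAbove (k : Fin (N+1)) (y : Fin N → ℝ) (j : Fin N) :
    ext0 k y (k.succAbove j) = y j := by
  simp only [ext0, LinearMap.coe_mk, AddHom.coe_mk]
  rw [Finset.sum_eq_single j] <;> simp_all [Fin.succAbove_right_injective.eq_iff]

lemma ext0_self (k : Fin (N+1)) (y : Fin N → ℝ) : ext0 k y k = 0 := by
  simp only [ext0, LinearMap.coe_mk, AddHom.coe_mk]
  exact Finset.sum_eq_zero fun j _ => by simp [Fin.succAbove_ne k j]

lemma ext0_dot (k : Fin (N+1)) (y z : Fin N → ℝ) :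
    ext0 k y ⬝ᵥ ext0 k z = y ⬝ᵥ z := by
  unfold dotProduct
  rw [Fin.sum_univ_succAbove _ k]
  simp [ext0_self, ext0_succAbove]

lemma ext0_quad (k : Fin (N+1)) (A : Matrix (Fin (N+1)) (Fin (N+1)) ℝ) (y : Fin N → ℝ) :
    ext0 k y ⬝ᵥ (A *ᵥ ext0 k y) = y ⬝ᵥ ((A.submatrix k.succAbove k.succAbove) *ᵥ y) := by
  have hmv : ∀ j, (A *ᵥ ext0 k y) (k.succAbove j)
      = ((A.submatrix k.succAbove k.succAbove) *ᵥ y) j := by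
    intro j
    unfold mulVec dotProduct
    rw [Fin.sum_univ_succAbove _ k]
    simp [ext0_self, ext0_succAbove, submatrix_apply]
  unfold dotProduct
  rw [Fin.sum_univ_succAbove _ k]
  simp [ext0_self, ext0_succAbove, hmv]

lemma ext0_inj (k : Fin (N+1)) : Function.Injective (ext0 k) := by
  intro y z h
  funext j
  have := congrFun h (k.succAbove j)
  rwa [ext0_succAbove, ext0_succAbove] at this

end Aux

open Matrix Finset Submodule Module

noncomputable section Aux2

variable {m : Type*} [Fintype m] [DecidableEq m]

lemma sum_dot {ι : Type*} (s : Finset ι) (f : ι → m → ℝ) (y : m → ℝ) :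
    (∑ i ∈ s, f i) ⬝ᵥ y = ∑ i ∈ s, (f i ⬝ᵥ y) := by
  simp only [dotProduct, Finset.sum_apply, Finset.sum_mul]
  exact Finset.sum_comm

lemma dot_sum {ι : Type*} (s : Finset ι) (f : ι → m → ℝ) (y : m → ℝ) :
    y ⬝ᵥ (∑ i ∈ s, f i) = ∑ i ∈ s, (y ⬝ᵥ f i) := by
  simp only [dotProduct, Finset.sum_apply, Finset.mul_sum]
  exact Finset.sum_comm

lemma mulVec_sum' {ι : Type*} (s : Finset ι) (M : Matrix m m ℝ) (f : ι → m → ℝ) :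
    M *ᵥ (∑ i ∈ s, f i) = ∑ i ∈ s, M *ᵥ f i := by
  simpa only [mulVecLin_apply] using map_sum M.mulVecLin f s

lemma li_of_dot (v : m → (m → ℝ))
    (hon : ∀ i j, v i ⬝ᵥ v j = if i = j then 1 else 0) :
    LinearIndependent ℝ v := by
  rw [Fintype.linearIndependent_iff]
  intro g hg i
  have h := congrArg (fun x => x ⬝ᵥ v i) hg
  simp only [zero_dotProduct] at h
  rw [sum_dot] at h
  simpa [smul_dotProduct, hon] using h

lemma rayleigh_le (M : Matrix m m ℝ) (v : m → (m → ℝ)) (μ : m → ℝ)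
    (hon : ∀ i j, v i ⬝ᵥ v j = if i = j then 1 else 0)
    (heig : ∀ j, M *ᵥ v j = μ j • v j)
    (S : Finset m) (c : ℝ) (hc : ∀ j ∈ S, c ≤ μ j)
    (x : m → ℝ) (hx : x ∈ Submodule.span ℝ (v '' S)) :
    c * (x ⬝ᵥ x) ≤ x ⬝ᵥ (M *ᵥ x) := by
  have himg : v '' S = Set.range (fun j : S => v j) := by
    ext t; simp [Set.mem_image, Set.mem_range, Subtype.exists]
  rw [himg, mem_span_range_iff_exists_fun] at hx
  obtain ⟨a, ha⟩ := hx
  have honS : ∀ i j : S, v i ⬝ᵥ v j = if i = j then 1 else 0 := by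
    intro i j; rw [hon]; exact if_congr Subtype.val_inj rfl rfl
  have hxx : x ⬝ᵥ x = ∑ j : S, a j ^ 2 := by
    rw [← ha, sum_dot]
    simp only [smul_dotProduct, dot_sum, dotProduct_smul, honS]
    simp [Finset.sum_ite_eq', sq, smul_eq_mul]
  have hMx : x ⬝ᵥ (M *ᵥ x) = ∑ j : S, μ j * a j ^ 2 := by
    have hMxv : M *ᵥ x = ∑ j : S, (a j * μ j) • v j := by
      rw [← ha, mulVec_sum']
      refine Finset.sum_congr rfl fun j _ => ?_
      rw [mulVec_smul, heig, smul_smul]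
    rw [hMxv, ← ha, sum_dot]
    simp only [smul_dotProduct, dot_sum, dotProduct_smul, honS]
    simp only [smul_eq_mul, mul_ite, mul_one, mul_zero, Finset.sum_ite_eq, Finset.sum_ite_eq', Finset.mem_univ,
      if_true]
    exact Finset.sum_congr rfl fun j _ => by ring
  rw [hxx, hMx, Finset.mul_sum]
  exact Finset.sum_le_sum fun j _ => mul_le_mul_of_nonneg_right (hc j j.2) (sq_nonneg _)

lemma exists_ne_zero_mem_inf (U W : Submodule ℝ (m → ℝ))
    (h : Fintype.card m < finrank ℝ U + finrank ℝ W) : ∃ x, x ≠ 0 ∧ x ∈ U ⊓ W := by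
  have h1 := Submodule.finrank_sup_add_finrank_inf_eq U W
  have h2 : finrank ℝ (U ⊔ W : Submodule ℝ (m → ℝ)) ≤ Fintype.card m := by
    simpa using (Submodule.finrank_le (U ⊔ W))
  have hpos : 0 < finrank ℝ (U ⊓ W : Submodule ℝ (m → ℝ)) := by omega
  have : Nontrivial (U ⊓ W : Submodule ℝ (m → ℝ)) := Module.finrank_pos_iff.mp hpos
  obtain ⟨⟨x, hx⟩, hx0⟩ := exists_ne (0 : (U ⊓ W : Submodule ℝ (m → ℝ)))
  exact ⟨x, by simpa [Submodule.mk_eq_zero] using hx0, hx⟩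

lemma finrank_span_image (v : m → (m → ℝ)) (hli : LinearIndependent ℝ v) (S : Finset m) :
    finrank ℝ (Submodule.span ℝ (v '' S)) = S.card := by
  have himg : v '' S = Set.range (fun j : S => v j) := by
    ext t; simp [Set.mem_image, Set.mem_range, Subtype.exists]
  have hli' : LinearIndependent ℝ (fun j : S => v ↑j) := hli.comp _ Subtype.val_injective
  rw [himg, finrank_span_eq_card hli']
  simp

end Aux2

open Matrix Finset Submodule Module

noncomputable section Aux3

variable {m : Type*} [Fintype m] [DecidableEq m]

/-- abbreviation for the descending sorted list of values of f -/
def descList (f : m → ℝ) : List ℝ := ((Finset.univ.val.map f).sort (· ≤ ·)).reverse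

lemma descList_length (f : m → ℝ) : (descList f).length = Fintype.card m := by
  simp [descList]

lemma descList_sorted (f : m → ℝ) : (descList f).Pairwise (· ≥ ·) := by
  have h := Multiset.pairwise_sort (Finset.univ.val.map f) (· ≤ ·)
  rw [descList, List.pairwise_reverse]
  exact h.imp (fun h' => h')

lemma descList_countP (f : m → ℝ) (p : ℝ → Prop) [DecidablePred p] :
    ((descList f).filter (fun a => decide (p a))).length
      = (Finset.univ.filter (fun j => p (f j))).card := by
  rw [← List.countP_eq_length_filter, descList, List.countP_reverse,
    ← Multiset.coe_countP, Multiset.sort_eq, Multiset.countP_map]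
  rfl

lemma sorted_ge_getElem_le (L : List ℝ) (hL : L.Pairwise (· ≥ ·)) {i j : ℕ}
    (hi : i < L.length) (hj : j < L.length) (h : j ≤ i) : L[i] ≤ L[j] :=
  hL.rel_get_of_le (a := ⟨j, hj⟩) (b := ⟨i, hi⟩) h

lemma count_ge_of_sorted (f : m → ℝ) {i : ℕ} (hi : i < (descList f).length) :
    i + 1 ≤ (Finset.univ.filter (fun j => (descList f)[i] ≤ f j)).card := by
  set L := descList f with hLdef
  set c := L[i] with hc
  rw [← descList_countP f (fun a => c ≤ a)]
  have hsub : List.Sublist ((L.take (i+1)).filter (fun a => decide (c ≤ a)))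
      (L.filter (fun a => decide (c ≤ a))) := (List.take_sublist _ _).filter _
  have heq : (L.take (i+1)).filter (fun a => decide (c ≤ a)) = L.take (i+1) := by
    rw [List.filter_eq_self]
    intro a ha
    obtain ⟨j, hj, rfl⟩ := List.mem_iff_getElem.mp ha
    rw [List.getElem_take]
    have hj' : j < L.length := lt_of_lt_of_le hj (by simpa using List.length_take_le _ _)
    simp only [decide_eq_true_eq]
    exact sorted_ge_getElem_le L (descList_sorted f) hi hj'
      (by have := hj; simp only [List.length_take] at this; omega)
  calc i + 1 = (L.take (i+1)).length := by simp [List.length_take]; omega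
    _ ≤ (L.filter (fun a => decide (c ≤ a))).length := by
        rw [← heq]; exact hsub.length_le

lemma count_le_of_sorted (f : m → ℝ) {i : ℕ} (hi : i < (descList f).length) :
    Fintype.card m - i ≤ (Finset.univ.filter (fun j => f j ≤ (descList f)[i])).card := by
  set L := descList f with hLdef
  set c := L[i] with hc
  rw [← descList_countP f (fun a => a ≤ c)]
  have hsub : List.Sublist ((L.drop i).filter (fun a => decide (a ≤ c)))
      (L.filter (fun a => decide (a ≤ c))) := (List.drop_sublist _ _).filter _
  have heq : (L.drop i).filter (fun a => decide (a ≤ c)) = L.drop i := by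
    rw [List.filter_eq_self]
    intro a ha
    obtain ⟨j, hj, rfl⟩ := List.mem_iff_getElem.mp ha
    rw [List.getElem_drop]
    simp only [List.length_drop] at hj
    simp only [decide_eq_true_eq]
    exact sorted_ge_getElem_le L (descList_sorted f) (by omega) hi (by omega)
  calc Fintype.card m - i = (L.drop i).length := by rw [List.length_drop, hLdef, descList_length]
    _ ≤ (L.filter (fun a => decide (a ≤ c))).length := by
        rw [← heq]; exact hsub.length_le

end Aux3

noncomputable section Aux4

lemma eig_dot {m : Type*} [Fintype m] [DecidableEq m] {M : Matrix m m ℝ}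
    (hM : M.IsHermitian) (i j : m) :
    (hM.eigenvectorBasis i : m → ℝ) ⬝ᵥ (hM.eigenvectorBasis j : m → ℝ)
      = if i = j then 1 else 0 := by
  have h := orthonormal_iff_ite.mp hM.eigenvectorBasis.orthonormal i j
  rw [← h]
  simp [dotProduct, PiLp.inner_apply, RCLike.inner_apply, conj_trivial, mul_comm]

lemma key {N : ℕ} (A : Matrix (Fin (N+1)) (Fin (N+1)) ℝ) (k : Fin (N+1))
    (vA : Fin (N+1) → (Fin (N+1) → ℝ)) (lA : Fin (N+1) → ℝ)
    (honA : ∀ i j, vA i ⬝ᵥ vA j = if i = j then 1 else 0)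
    (heigA : ∀ j, A *ᵥ vA j = lA j • vA j)
    (vB : Fin N → (Fin N → ℝ)) (lB : Fin N → ℝ)
    (honB : ∀ i j, vB i ⬝ᵥ vB j = if i = j then 1 else 0)
    (heigB : ∀ j, (A.submatrix k.succAbove k.succAbove) *ᵥ vB j = lB j • vB j)
    (SA : Finset (Fin (N+1))) (SB : Finset (Fin N))
    (hcard : N + 2 ≤ SA.card + SB.card) (cA cB : ℝ)
    (hA' : ∀ j ∈ SA, lA j ≤ cA) (hB' : ∀ j ∈ SB, cB ≤ lB j) : cB ≤ cA := by
  set U := Submodule.span ℝ (vA '' SA) with hUdef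
  set W := Submodule.map (ext0 k) (Submodule.span ℝ (vB '' SB)) with hWdef
  have hU : finrank ℝ U = SA.card := finrank_span_image _ (li_of_dot _ honA) _
  have hW : finrank ℝ W = SB.card := by
    rw [← finrank_span_image _ (li_of_dot _ honB) SB]
    exact (Submodule.equivMapOfInjective (ext0 k) (ext0_inj k) _).finrank_eq.symm
  obtain ⟨x, hx0, hxm⟩ := exists_ne_zero_mem_inf U W (by
    rw [hU, hW, Fintype.card_fin]; omega)
  obtain ⟨hxU, hxW⟩ := hxm
  obtain ⟨y, hy, rfl⟩ := hxW
  have h1 : -cA * (ext0 k y ⬝ᵥ ext0 k y) ≤ ext0 k y ⬝ᵥ ((-A) *ᵥ ext0 k y) :=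
    rayleigh_le (-A) vA (fun j => -lA j) honA
      (fun j => by rw [neg_mulVec, heigA j, neg_smul]) SA (-cA)
      (fun j hj => neg_le_neg (hA' j hj)) _ hxU
  rw [neg_mulVec, dotProduct_neg, neg_mul, neg_le_neg_iff] at h1
  have h2 : cB * (y ⬝ᵥ y) ≤ y ⬝ᵥ ((A.submatrix k.succAbove k.succAbove) *ᵥ y) :=
    rayleigh_le _ vB lB honB heigB SB cB hB' y hy
  rw [← ext0_quad, ← ext0_dot k y y] at h2
  have hpos : 0 < ext0 k y ⬝ᵥ ext0 k y := by
    have := dotProduct_self_star_pos_iff (v := ext0 k y) |>.mpr hx0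
    simpa using this
  exact le_of_mul_le_mul_right (h2.trans h1) hpos

end Aux4


/-- Cauchy interlacing: if `B` is the principal submatrix of the real symmetric
matrix `A` obtained by deleting row and column `k`, and `μ₁ ≥ … ≥ μ_{n+1}`,
`μ'₁ ≥ … ≥ μ'ₙ` are the eigenvalues of `A`, `B` respectively, then
`μᵢ ≥ μ'ᵢ ≥ μ_{i+1}` for all `1 ≤ i ≤ n`. -/
theorem cauchy_interlacing (n : ℕ) (A : Matrix (Fin (n+1)) (Fin (n+1)) ℝ)
    (hA : A.IsHermitian) (k : Fin (n+1))
    (hB : (A.submatrix k.succAbove k.succAbove).IsHermitian) :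
    ∀ i : Fin n,
      (descEigs _ hB).getD i 0 ≤ (descEigs _ hA).getD i 0 ∧
      (descEigs _ hA).getD (i.1 + 1) 0 ≤ (descEigs _ hB).getD i 0 := by
  intro i
  have hik : (i : ℕ) < n := i.2
  have hlenA : (descList hA.eigenvalues).length = n + 1 := by
    rw [descList_length, Fintype.card_fin]
  have hlenB : (descList hB.eigenvalues).length = n := by
    rw [descList_length, Fintype.card_fin]
  have hiA : (i : ℕ) < (descList hA.eigenvalues).length := by omega
  have hiA1 : (i : ℕ) + 1 < (descList hA.eigenvalues).length := by omega
  have hiB : (i : ℕ) < (descList hB.eigenvalues).length := by omega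
  have hdA : descEigs A hA = descList hA.eigenvalues := rfl
  have hdB : descEigs (A.submatrix k.succAbove k.succAbove) hB = descList hB.eigenvalues := rfl
  rw [hdA, hdB, List.getD_eq_getElem _ _ hiA, List.getD_eq_getElem _ _ hiA1,
    List.getD_eq_getElem _ _ hiB]
  have honA := eig_dot hA
  have heigA := hA.mulVec_eigenvectorBasis
  have honB := eig_dot hB
  have heigB := hB.mulVec_eigenvectorBasis
  constructor
  · refine key A k _ hA.eigenvalues honA heigA _ hB.eigenvalues honB heigB
      (Finset.univ.filter fun j => hA.eigenvalues j ≤ (descList hA.eigenvalues)[(i:ℕ)])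
      (Finset.univ.filter fun j => (descList hB.eigenvalues)[(i:ℕ)] ≤ hB.eigenvalues j)
      ?_ _ _ (fun j hj => (Finset.mem_filter.mp hj).2) (fun j hj => (Finset.mem_filter.mp hj).2)
    have h1 := count_le_of_sorted hA.eigenvalues hiA
    have h2 := count_ge_of_sorted hB.eigenvalues hiB
    rw [Fintype.card_fin] at h1
    omega
  · have hkey := key (-A) k _ (fun j => -hA.eigenvalues j) honA
      (fun j => by
        rw [neg_mulVec]
        exact (congrArg Neg.neg (heigA j)).trans (neg_smul _ _).symm)
      _ (fun j => -hB.eigenvalues j) honB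
      (fun j => by
        rw [show (-A).submatrix k.succAbove k.succAbove
            = -(A.submatrix k.succAbove k.succAbove) from rfl, neg_mulVec]
        exact (congrArg Neg.neg (heigB j)).trans (neg_smul _ _).symm)
      (Finset.univ.filter fun j => (descList hA.eigenvalues)[(i:ℕ)+1] ≤ hA.eigenvalues j)
      (Finset.univ.filter fun j => hB.eigenvalues j ≤ (descList hB.eigenvalues)[(i:ℕ)])
      ?_ (-(descList hA.eigenvalues)[(i:ℕ)+1]) (-(descList hB.eigenvalues)[(i:ℕ)])
      (fun j hj => neg_le_neg (Finset.mem_filter.mp hj).2)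
      (fun j hj => neg_le_neg (Finset.mem_filter.mp hj).2)
    · linarith
    · have h1 := count_ge_of_sorted hA.eigenvalues hiA1
      have h2 := count_le_of_sorted hB.eigenvalues hiB
      rw [Fintype.card_fin] at h2
      omega
end
end

section
/- Let p:[n]→ℝ^d satisfy ‖p(i)‖=1 for all i and Σᵢ p(i)=0, and suppose the image of p has at least 3 points. Then n/2 is an eigenvalue of L(K_n,p) with multiplicity at least n-1. -/
open Matrix

noncomputable section

lemma enorm_nonneg {d : ℕ} (v : Fin d → ℝ) : 0 ≤ _root_.enorm v := Real.sqrt_nonneg _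

lemma sq_enorm {d : ℕ} (v : Fin d → ℝ) : _root_.enorm v ^ 2 = ∑ i, v i ^ 2 :=
  Real.sq_sqrt (Finset.sum_nonneg fun i _ => sq_nonneg _)

lemma enormR_eq_zero {d : ℕ} {v : Fin d → ℝ} : _root_.enorm v = 0 ↔ v = 0 := by
  unfold _root_.enorm
  rw [Real.sqrt_eq_zero (Finset.sum_nonneg fun i _ => sq_nonneg _)]
  rw [Finset.sum_eq_zero_iff_of_nonneg fun i _ => sq_nonneg _]
  constructor
  · intro h; funext i; simpa using pow_eq_zero_iff (n := 2) (by norm_num) |>.1 (h i (Finset.mem_univ i))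
  · intro h i _; rw [h]; simp

lemma enormR_zero {d : ℕ} : _root_.enorm (0 : Fin d → ℝ) = 0 := enormR_eq_zero.2 rfl

lemma key1 {n d : ℕ} (p : Fin n → Fin d → ℝ) (i j : Fin n) (k : Fin d) :
    dvec p i j k * _root_.enorm (p i - p j) = p i k - p j k := by
  unfold dvec
  split_ifs with h
  · simp [h]
  · have hne : p i - p j ≠ 0 := sub_ne_zero.2 h
    have hE : _root_.enorm (p i - p j) ≠ 0 := fun hz => hne (enormR_eq_zero.1 hz)
    simp only [Pi.smul_apply, smul_eq_mul, Pi.sub_apply]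
    field_simp

lemma dvec_self {n d : ℕ} (p : Fin n → Fin d → ℝ) (i : Fin n) : dvec p i i = 0 := by
  unfold dvec; simp

lemma dvec_antisym {n d : ℕ} (p : Fin n → Fin d → ℝ) (i j : Fin n) :
    dvec p j i = - dvec p i j := by
  unfold dvec
  split_ifs with h1 h2 h2
  · simp
  · exact absurd h1.symm h2
  · exact absurd h2.symm h1
  · have : p j - p i = -(p i - p j) := by ring
    rw [this]
    have : _root_.enorm (-(p i - p j)) = _root_.enorm (p i - p j) := by
      unfold _root_.enorm; congr 1; apply Finset.sum_congr rfl; intros; rw [Pi.neg_apply]; ring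
    rw [this, smul_neg]

lemma expand_sum {d : ℕ} (a b : Fin d → ℝ) (c1 c2 : ℝ) :
    ∑ k, (a k - b k) * (c1 * a k - c2 * b k)
      = c1 * (∑ k, a k ^ 2) - (c1 + c2) * (∑ k, a k * b k) + c2 * (∑ k, b k ^ 2) := by
  simp only [Finset.mul_sum, ← Finset.sum_sub_distrib, ← Finset.sum_add_distrib]
  exact Finset.sum_congr rfl fun k _ => by ring

-- needs hnorm
lemma key2 {n d : ℕ} (p : Fin n → Fin d → ℝ) (hnorm : ∀ i, _root_.enorm (p i) = 1)
    (f : Fin n → ℝ) (i j : Fin n) :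
    ∑ k, dvec p i j k * (f i * p i k - f j * p j k)
      = (f i + f j) * _root_.enorm (p i - p j) / 2 := by
  by_cases h : p i = p j
  · have : p i - p j = 0 := sub_eq_zero.2 h
    rw [this, enormR_zero]
    unfold dvec
    simp [h]
  · have hne : p i - p j ≠ 0 := sub_ne_zero.2 h
    have hE : _root_.enorm (p i - p j) ≠ 0 := fun hz => hne (enormR_eq_zero.1 hz)
    have hi2 : ∑ k, p i k ^ 2 = 1 := by
      have := sq_enorm (p i); rw [hnorm i] at this; linarith [this.symm]
    have hj2 : ∑ k, p j k ^ 2 = 1 := by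
      have := sq_enorm (p j); rw [hnorm j] at this; linarith [this.symm]
    have hE2 : _root_.enorm (p i - p j) ^ 2 = 2 - 2 * ∑ k, p i k * p j k := by
      rw [sq_enorm]
      have : ∀ k, (p i - p j) k ^ 2 = p i k ^2 - 2 * (p i k * p j k) + p j k ^2 := by
        intro k; simp only [Pi.sub_apply]; ring
      rw [Finset.sum_congr rfl fun k _ => this k]
      rw [Finset.sum_add_distrib, Finset.sum_sub_distrib, ← Finset.mul_sum, hi2, hj2]
      ring
    unfold dvec
    rw [if_neg h]
    simp only [Pi.smul_apply, smul_eq_mul, Pi.sub_apply]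
    have hsum : ∑ k, (_root_.enorm (p i - p j))⁻¹ * (p i k - p j k) * (f i * p i k - f j * p j k)
        = (_root_.enorm (p i - p j))⁻¹ * ∑ k, (p i k - p j k) * (f i * p i k - f j * p j k) := by
      rw [Finset.mul_sum]; exact Finset.sum_congr rfl fun k _ => by ring
    rw [hsum, expand_sum, hi2, hj2]
    have hc : ∑ k, p i k * p j k = 1 - _root_.enorm (p i - p j) ^ 2 / 2 := by linarith
    rw [hc]
    field_simp
    ring

lemma enorm_sub_symm {n d : ℕ} (p : Fin n → Fin d → ℝ) (a b : Fin n) :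
    _root_.enorm (p b - p a) = _root_.enorm (p a - p b) := by
  unfold _root_.enorm; congr 1; exact Finset.sum_congr rfl fun k _ => by
    simp only [Pi.sub_apply]; ring

def gfun {n d : ℕ} (p : Fin n → Fin d → ℝ) (f : Fin n → ℝ) (k : Fin d) (a b : Fin n) : ℝ :=
  dvec p a b k * ((f a + f b) * _root_.enorm (p a - p b))

lemma gfun_self {n d : ℕ} (p : Fin n → Fin d → ℝ) (f : Fin n → ℝ) (k : Fin d) (a : Fin n) :
    gfun p f k a a = 0 := by unfold gfun; rw [dvec_self]; simp

lemma gfun_antisym {n d : ℕ} (p : Fin n → Fin d → ℝ) (f : Fin n → ℝ) (k : Fin d) (a b : Fin n) :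
    gfun p f k b a = - gfun p f k a b := by
  unfold gfun
  rw [dvec_antisym, enorm_sub_symm]
  simp only [Pi.neg_apply]
  ring

lemma gfun_eq {n d : ℕ} (p : Fin n → Fin d → ℝ) (f : Fin n → ℝ) (k : Fin d) (a b : Fin n) :
    gfun p f k a b = (f a + f b) * (p a k - p b k) := by
  unfold gfun
  rw [← key1 p a b k]
  ring

lemma lemB {n d : ℕ} (p : Fin n → Fin d → ℝ) (hsum : ∑ i, p i = 0)
    (f : Fin n → ℝ) (hf : ∑ i, f i = 0) (v : Fin n × Fin d) :
    (rigidity (⊤ : SimpleGraph (Fin n)) p *ᵥ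
        (fun e : EdgeIdx (⊤ : SimpleGraph (Fin n)) =>
          (f e.1.1 + f e.1.2) * _root_.enorm (p e.1.1 - p e.1.2))) v
      = (n:ℝ) * f v.1 * p v.1 v.2 - ∑ j, f j * p j v.2 := by
  obtain ⟨i, k⟩ := v
  show ∑ e : EdgeIdx (⊤ : SimpleGraph (Fin n)), rigidity ⊤ p (i,k) e *
      ((f e.1.1 + f e.1.2) * _root_.enorm (p e.1.1 - p e.1.2)) = _
  have hsub : ∑ e : EdgeIdx (⊤ : SimpleGraph (Fin n)), rigidity ⊤ p (i,k) e *
      ((f e.1.1 + f e.1.2) * _root_.enorm (p e.1.1 - p e.1.2))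
      = ∑ e ∈ Finset.univ.filter (fun e : Fin n × Fin n => e.1 < e.2),
          ((if i = e.1 then (1:ℝ) else 0) - (if i = e.2 then 1 else 0)) * gfun p f k e.1 e.2 := by
    rw [Finset.sum_subtype
      (p := fun e : Fin n × Fin n => e.1 < e.2 ∧ (⊤ : SimpleGraph (Fin n)).Adj e.1 e.2)
      (Finset.univ.filter (fun e : Fin n × Fin n => e.1 < e.2))
      (fun x => by
        simp only [Finset.mem_filter, Finset.mem_univ, true_and, SimpleGraph.top_adj]
        exact ⟨fun h => ⟨h, ne_of_lt h⟩, fun h => h.1⟩)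
      (fun e => ((if i = e.1 then (1:ℝ) else 0) - (if i = e.2 then 1 else 0)) * gfun p f k e.1 e.2)]
    refine Finset.sum_congr rfl fun e _ => ?_
    unfold rigidity gfun
    ring
  rw [hsub, Finset.sum_filter, Fintype.sum_prod_type]
  have hpt : ∀ a b : Fin n,
      (if a < b then ((if i = a then (1:ℝ) else 0) - (if i = b then 1 else 0)) * gfun p f k a b else 0)
      = (if i = a then (if a < b then gfun p f k a b else 0) else 0)
        - (if i = b then (if a < b then gfun p f k a b else 0) else 0) := by
    intro a b; split_ifs <;> ring
  simp only [hpt, Finset.sum_sub_distrib]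
  have h1 : ∑ a : Fin n, ∑ b : Fin n, (if i = a then (if a < b then gfun p f k a b else 0) else 0)
      = ∑ b : Fin n, (if i < b then gfun p f k i b else 0) := by
    have : ∀ a : Fin n, (∑ b : Fin n, if i = a then (if a < b then gfun p f k a b else 0) else 0)
        = if i = a then (∑ b : Fin n, if a < b then gfun p f k a b else 0) else 0 := by
      intro a; split_ifs <;> simp
    simp only [this]
    rw [Finset.sum_ite_eq]
    simp
  have h2 : ∑ a : Fin n, ∑ b : Fin n, (if i = b then (if a < b then gfun p f k a b else 0) else 0)
      = ∑ a : Fin n, (if a < i then gfun p f k a i else 0) := by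
    refine Finset.sum_congr rfl fun a _ => ?_
    rw [Finset.sum_ite_eq]
    simp
  rw [h1, h2, ← Finset.sum_sub_distrib]
  have h3 : ∀ j : Fin n, (if i < j then gfun p f k i j else 0) - (if j < i then gfun p f k j i else 0)
      = gfun p f k i j := by
    intro j
    rcases lt_trichotomy i j with h | h | h
    · rw [if_pos h, if_neg (asymm h), sub_zero]
    · subst h
      simp [gfun_self]
    · rw [if_neg (not_lt.2 (le_of_lt h)), if_pos h, gfun_antisym]
      ring
  simp only [h3]
  simp only [gfun_eq]
  have hp : ∑ j, p j k = 0 := by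
    have := congrFun hsum k
    simpa [Finset.sum_apply] using this
  have hexp : ∀ j : Fin n, (f i + f j) * (p i k - p j k)
      = f i * p i k + p i k * f j - f i * p j k - f j * p j k := fun j => by ring
  simp only [hexp]
  rw [Finset.sum_sub_distrib, Finset.sum_sub_distrib, Finset.sum_add_distrib,
    Finset.sum_const, ← Finset.mul_sum, ← Finset.mul_sum, hf, hp]
  simp [Finset.card_univ, nsmul_eq_mul]
  ring

lemma lemA {n d : ℕ} (p : Fin n → Fin d → ℝ) (hnorm : ∀ i, _root_.enorm (p i) = 1)
    (f : Fin n → ℝ) (e : EdgeIdx (⊤ : SimpleGraph (Fin n))) :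
    ((rigidity (⊤ : SimpleGraph (Fin n)) p)ᴴ *ᵥ
        (fun v : Fin n × Fin d => (n:ℝ) * f v.1 * p v.1 v.2 - ∑ j, f j * p j v.2)) e
      = ((n:ℝ)/2) * ((f e.1.1 + f e.1.2) * _root_.enorm (p e.1.1 - p e.1.2)) := by
  obtain ⟨⟨a, b⟩, hab, hadj⟩ := e
  show ∑ v : Fin n × Fin d, (rigidity (⊤ : SimpleGraph (Fin n)) p)ᴴ ⟨(a,b), hab, hadj⟩ v *
      ((n:ℝ) * f v.1 * p v.1 v.2 - ∑ j, f j * p j v.2) = _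
  have hct : ∀ v : Fin n × Fin d, (rigidity (⊤ : SimpleGraph (Fin n)) p)ᴴ ⟨(a,b), hab, hadj⟩ v
      = ((if v.1 = a then (1:ℝ) else 0) - (if v.1 = b then 1 else 0)) * dvec p a b v.2 := by
    intro v; rfl
  simp only [hct]
  rw [Fintype.sum_prod_type]
  have hpt : ∀ (i : Fin n) (k : Fin d),
      ((if i = a then (1:ℝ) else 0) - (if i = b then 1 else 0)) * dvec p a b k *
        ((n:ℝ) * f i * p i k - ∑ j, f j * p j k)
      = (if i = a then (dvec p a b k * ((n:ℝ) * f i * p i k - ∑ j, f j * p j k)) else 0)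
        - (if i = b then (dvec p a b k * ((n:ℝ) * f i * p i k - ∑ j, f j * p j k)) else 0) := by
    intro i k; split_ifs <;> ring
  simp only [hpt, Finset.sum_sub_distrib]
  have hA1 : ∀ c : Fin n, ∀ i : Fin n,
      (∑ k : Fin d, if i = c then (dvec p a b k * ((n:ℝ) * f i * p i k - ∑ j, f j * p j k)) else 0)
      = if i = c then (∑ k : Fin d, dvec p a b k * ((n:ℝ) * f i * p i k - ∑ j, f j * p j k)) else 0 := by
    intro c i; split_ifs <;> simp
  simp only [hA1]
  rw [Finset.sum_ite_eq' Finset.univ a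
    (fun i => ∑ k : Fin d, dvec p a b k * ((n:ℝ) * f i * p i k - ∑ j, f j * p j k))]
  rw [Finset.sum_ite_eq' Finset.univ b
    (fun i => ∑ k : Fin d, dvec p a b k * ((n:ℝ) * f i * p i k - ∑ j, f j * p j k))]
  simp only [Finset.mem_univ, if_pos]
  rw [← Finset.sum_sub_distrib]
  have hptw : ∀ k : Fin d,
      dvec p a b k * ((n:ℝ) * f a * p a k - ∑ j, f j * p j k)
        - dvec p a b k * ((n:ℝ) * f b * p b k - ∑ j, f j * p j k)
      = (n:ℝ) * (dvec p a b k * (f a * p a k - f b * p b k)) := fun k => by ring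
  simp only [hptw]
  rw [← Finset.mul_sum, key2 p hnorm f a b]
  ring


lemma count_eigen_ge {m : Type*} [Fintype m] [DecidableEq m] (A : Matrix m m ℝ)
    (hA : A.IsHermitian) (μ : ℝ) (W : Submodule ℝ (EuclideanSpace ℝ m))
    (hW : ∀ x ∈ W, A *ᵥ x = μ • x) :
    Module.finrank ℝ W ≤ Multiset.count μ (Finset.univ.val.map hA.eigenvalues) := by
  classical
  set b := hA.eigenvectorBasis.toBasis with hb
  set S : Finset m := Finset.univ.filter (fun i => hA.eigenvalues i = μ) with hS
  have hcount : Multiset.count μ (Finset.univ.val.map hA.eigenvalues) = S.card := by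
    rw [Multiset.count_map]
    congr 1
    apply Multiset.filter_congr
    intro i _
    constructor <;> (intro h; exact h.symm)
  rw [hcount]
  have hle : W ≤ Submodule.span ℝ (b '' ↑S) := by
    intro x hx
    rw [Module.Basis.mem_span_image]
    intro i hi
    simp only [Finsupp.mem_support_iff, Finset.mem_coe] at hi
    rw [hS, Finset.mem_coe, Finset.mem_filter]
    refine ⟨Finset.mem_univ i, ?_⟩
    by_contra hne
    apply hi
    -- compute repr of A *ᵥ x at i in two ways
    have hrepr : x = ∑ j, b.repr x j • b j := (b.sum_repr x).symm
    have h1 : A *ᵥ x = ∑ j, (b.repr x j * hA.eigenvalues j) • b j := by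
      conv_lhs => rw [hrepr]
      have : A *ᵥ (∑ j, b.repr x j • (b j : EuclideanSpace ℝ m))
          = ∑ j, b.repr x j • (A *ᵥ (b j : EuclideanSpace ℝ m)) := by
        simp only [← Matrix.mulVecLin_apply, map_sum]
        exact Finset.sum_congr rfl fun j _ => _root_.map_smul _ _ _
      simp only [WithLp.ofLp_sum, WithLp.ofLp_smul]
      rw [this]
      refine Finset.sum_congr rfl fun j _ => ?_
      have h := hA.mulVec_eigenvectorBasis j
      rw [hb]
      simp only [OrthonormalBasis.coe_toBasis]
      rw [← smul_smul]
      exact congrArg _ h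
    have h2 : A *ᵥ x = ∑ j, (μ * b.repr x j) • b j := by
      rw [hW x hx]
      conv_lhs => rw [hrepr]
      simp only [WithLp.ofLp_sum, WithLp.ofLp_smul]
      rw [Finset.smul_sum]
      refine Finset.sum_congr rfl fun j _ => by rw [smul_smul]
    have h3 : b.repr x i * hA.eigenvalues i = μ * b.repr x i := by
      have e1 := congrArg (fun v => b.repr (WithLp.toLp 2 v) i) h1
      have e2 := congrArg (fun v => b.repr (WithLp.toLp 2 v) i) h2
      simp only [WithLp.toLp_ofLp, Module.Basis.repr_sum_self] at e1 e2
      rw [← e1, ← e2]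
    have : b.repr x i * (hA.eigenvalues i - μ) = 0 := by ring_nf; linarith [h3]
    rcases mul_eq_zero.1 this with h | h
    · exact h
    · exact absurd (by linarith [sub_eq_zero.1 h] : hA.eigenvalues i = μ) hne
  calc Module.finrank ℝ W ≤ Module.finrank ℝ (Submodule.span ℝ (b '' ↑S)) :=
        Submodule.finrank_mono hle
    _ ≤ _ := by
        rw [← Finset.coe_image]
        refine le_trans (finrank_span_le_card _) ?_
        rw [Finset.toFinset_coe]
        exact Finset.card_image_le


lemma enormR_smul {d : ℕ} (c : ℝ) (v : Fin d → ℝ) : _root_.enorm (c • v) = |c| * _root_.enorm v := by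
  unfold _root_.enorm
  rw [show ∑ i, (c • v) i ^ 2 = c ^ 2 * ∑ i, v i ^ 2 from by
    rw [Finset.mul_sum]; exact Finset.sum_congr rfl fun i _ => by
      simp only [Pi.smul_apply, smul_eq_mul]; ring]
  rw [Real.sqrt_mul (sq_nonneg c), Real.sqrt_sq_eq_abs]

def Fmap (n d : ℕ) (p : Fin n → Fin d → ℝ) :
    (Fin n → ℝ) →ₗ[ℝ] EuclideanSpace ℝ (Fin n × Fin d) where
  toFun f := WithLp.toLp 2 (fun v : Fin n × Fin d => (n:ℝ) * f v.1 * p v.1 v.2 - ∑ j, f j * p j v.2)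
  map_add' f g := by
    apply WithLp.ofLp_injective; funext v
    show (n:ℝ) * (f + g) v.1 * p v.1 v.2 - ∑ j, (f + g) j * p j v.2
      = ((n:ℝ) * f v.1 * p v.1 v.2 - ∑ j, f j * p j v.2)
        + ((n:ℝ) * g v.1 * p v.1 v.2 - ∑ j, g j * p j v.2)
    rw [show ∑ j, (f + g) j * p j v.2 = (∑ j, f j * p j v.2) + ∑ j, g j * p j v.2 from by
      rw [← Finset.sum_add_distrib]; exact Finset.sum_congr rfl fun j _ => by
        simp only [Pi.add_apply]; ring]
    simp only [Pi.add_apply]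
    ring
  map_smul' c f := by
    apply WithLp.ofLp_injective; funext v
    show (n:ℝ) * (c • f) v.1 * p v.1 v.2 - ∑ j, (c • f) j * p j v.2
      = c * ((n:ℝ) * f v.1 * p v.1 v.2 - ∑ j, f j * p j v.2)
    rw [show ∑ j, (c • f) j * p j v.2 = c * ∑ j, f j * p j v.2 from by
      rw [Finset.mul_sum]; exact Finset.sum_congr rfl fun j _ => by
        simp only [Pi.smul_apply, smul_eq_mul]; ring]
    simp only [Pi.smul_apply, smul_eq_mul]
    ring

def sumFun (n : ℕ) : (Fin n → ℝ) →ₗ[ℝ] ℝ where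
  toFun f := ∑ i, f i
  map_add' f g := by simp [Finset.sum_add_distrib]
  map_smul' c f := by simp [Finset.mul_sum]


/-- doc -/
theorem half_n_eigenvalue_multiplicity (n d : ℕ) (p : Fin n → Fin d → ℝ)
    (hnorm : ∀ i, _root_.enorm (p i) = 1) (hsum : ∑ i, p i = 0)
    (him : 3 ≤ (Finset.univ.image p).card) :
    n - 1 ≤ Multiset.count ((n : ℝ)/2)
      (Finset.univ.val.map
        (stiffness_isHermitian (⊤ : SimpleGraph (Fin n)) p).eigenvalues) := by
  classical
  have hn3 : 3 ≤ n := le_trans him (le_trans Finset.card_image_le (by simp))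
  have hn0 : (n : ℝ) ≠ 0 := by positivity
  set ℓ := sumFun n with hℓ
  set F := Fmap n d p with hF
  set G := F.comp (LinearMap.ker ℓ).subtype with hG
  -- injectivity of G
  have hGinj : Function.Injective G := by
    rw [← LinearMap.ker_eq_bot]
    rw [LinearMap.ker_eq_bot']
    rintro ⟨f, hf⟩ hGf
    have hf0 : ∑ i, f i = 0 := hf
    have hFf : ∀ v : Fin n × Fin d, (n:ℝ) * f v.1 * p v.1 v.2 - ∑ j, f j * p j v.2 = 0 :=
      fun v => congrFun (congrArg WithLp.ofLp hGf) v
    refine Subtype.ext (show f = 0 from ?_)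
    by_contra hfne
    obtain ⟨i0, hi0⟩ : ∃ i, f i ≠ 0 := by
      by_contra h
      push_neg at h
      exact hfne (funext h)
    set q : Fin d → ℝ := fun k => ∑ j, f j * p j k with hq
    have hkey : ∀ (i : Fin n) (k : Fin d), (n:ℝ) * f i * p i k = q k := by
      intro i k
      have := hFf (i, k)
      simp only [hq]
      linarith [this]
    have hpn0 : ∀ i : Fin n, p i ≠ 0 := by
      intro i hp0
      have := hnorm i
      rw [hp0, enormR_zero] at this
      norm_num at this
    have hfall : ∀ j : Fin n, f j ≠ 0 := by
      intro j hfj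
      have hq0 : ∀ k, q k = 0 := by
        intro k
        have := hkey j k
        rw [hfj] at this
        linarith [this]
      have : ∀ k, p i0 k = 0 := by
        intro k
        have h := hkey i0 k
        rw [hq0 k] at h
        rcases mul_eq_zero.1 h with h' | h'
        · exact absurd h' (mul_ne_zero hn0 hi0)
        · exact h'
      exact hpn0 i0 (funext this)
    have hpj : ∀ j : Fin n, p j = ((n:ℝ) * f j)⁻¹ • q := by
      intro j
      funext k
      have h := hkey j k
      have hnf : (n:ℝ) * f j ≠ 0 := mul_ne_zero hn0 (hfall j)
      simp only [Pi.smul_apply, smul_eq_mul]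
      rw [← h, ← mul_assoc, inv_mul_cancel₀ hnf, one_mul]
    have hqn0 : _root_.enorm q ≠ 0 := by
      intro h
      have hq0 := enormR_eq_zero.1 h
      have := hpj i0
      rw [hq0, smul_zero] at this
      exact hpn0 i0 this
    have habs : ∀ j : Fin n, |(n:ℝ) * f j| = _root_.enorm q := by
      intro j
      have h1 := hnorm j
      rw [hpj j, enormR_smul, abs_inv] at h1
      have hnf : |(n:ℝ) * f j| ≠ 0 := abs_ne_zero.2 (mul_ne_zero hn0 (hfall j))
      field_simp at h1
      linarith [h1]
    set u : Fin d → ℝ := (_root_.enorm q)⁻¹ • q with hu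
    have hpm : ∀ j : Fin n, p j = u ∨ p j = -u := by
      intro j
      rcases (abs_eq (enorm_nonneg q)).1 (habs j) with h | h
      · left; rw [hpj j, h]
      · right
        rw [hpj j, h, hu]
        funext k
        simp only [Pi.smul_apply, smul_eq_mul, Pi.neg_apply]
        have hE : _root_.enorm q ≠ 0 := hqn0
        field_simp
    have hsub2 : (Finset.univ.image p) ⊆ {u, -u} := by
      intro x hx
      obtain ⟨j, _, rfl⟩ := Finset.mem_image.1 hx
      rcases hpm j with h | h <;> simp [h]
    have : (3 : ℕ) ≤ 2 := le_trans him (le_trans (Finset.card_le_card hsub2)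
      (le_trans (Finset.card_insert_le _ _) (by simp)))
    omega
  -- dimension of kernel of sum functional
  have hker : Module.finrank ℝ (LinearMap.ker ℓ) = n - 1 := by
    have hrn := LinearMap.finrank_range_add_finrank_ker ℓ
    have hdom : Module.finrank ℝ (Fin n → ℝ) = n := by
      rw [Module.finrank_fintype_fun_eq_card, Fintype.card_fin]
    have hsurj : Function.Surjective ℓ := by
      intro r
      refine ⟨fun _ => r / n, ?_⟩
      show ∑ _i : Fin n, r / n = r
      rw [Finset.sum_const, Finset.card_univ, Fintype.card_fin, nsmul_eq_mul]
      field_simp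
    have hrange : Module.finrank ℝ (LinearMap.range ℓ) = 1 := by
      rw [LinearMap.range_eq_top.2 hsurj, finrank_top, Module.finrank_self]
    rw [hdom, hrange] at hrn
    omega
  have hrk : Module.finrank ℝ (LinearMap.range G) = n - 1 := by
    rw [LinearMap.finrank_range_of_inj hGinj, hker]
  rw [← hrk]
  apply count_eigen_ge (stiffness (⊤ : SimpleGraph (Fin n)) p)
    (stiffness_isHermitian (⊤ : SimpleGraph (Fin n)) p) ((n:ℝ)/2) (LinearMap.range G)
  rintro x ⟨⟨f, hf⟩, rfl⟩
  have hf0 : ∑ i, f i = 0 := hf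
  have hxval : (G ⟨f, hf⟩ : EuclideanSpace ℝ (Fin n × Fin d))
      = fun v : Fin n × Fin d => (n:ℝ) * f v.1 * p v.1 v.2 - ∑ j, f j * p j v.2 := rfl
  rw [hxval]
  show stiffness (⊤ : SimpleGraph (Fin n)) p *ᵥ _ = _
  rw [stiffness, ← Matrix.mulVec_mulVec]
  have hA : (rigidity (⊤ : SimpleGraph (Fin n)) p)ᴴ *ᵥ
      (fun v : Fin n × Fin d => (n:ℝ) * f v.1 * p v.1 v.2 - ∑ j, f j * p j v.2)
      = ((n:ℝ)/2) • (fun e : EdgeIdx (⊤ : SimpleGraph (Fin n)) =>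
          (f e.1.1 + f e.1.2) * _root_.enorm (p e.1.1 - p e.1.2)) := by
    funext e
    exact lemA p hnorm f e
  rw [hA, Matrix.mulVec_smul]
  have hB : rigidity (⊤ : SimpleGraph (Fin n)) p *ᵥ
      (fun e : EdgeIdx (⊤ : SimpleGraph (Fin n)) =>
        (f e.1.1 + f e.1.2) * _root_.enorm (p e.1.1 - p e.1.2))
      = fun v : Fin n × Fin d => (n:ℝ) * f v.1 * p v.1 v.2 - ∑ j, f j * p j v.2 := by
    funext v
    exact lemB p hsum f hf0 v
  rw [hB]
end
end
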